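/- For all integers p, q, and t, the identity (2(p+q)t² + 4qt + q)³ + (2(p+q)t² + 4qt - p + 2q)³ + (-2(p+q)t² + (p-3q)t + p)³ + (-2(p+q)t² - (p+5q)t + p - 2q)³ = p³ + q³ holds. -/
import Mathlib

theorem stmt0 (p q t : ℤ) :
    (2*(p+q)*t^2 + 4*q*t + q)^3 + (2*(p+q)*t^2 + 4*q*t - p + 2*q)^3
    + (-2*(p+q)*t^2 + (p-3*q)*t + p)^3 + (-2*(p+q)*t^2 - (p+5*q)*t + p - 2*q)^3
    = p^3 + q^3 := by ring
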